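/- Let n be a natural number and H an additive subgroup of ℝⁿ. Then there exist an ℝ-linear subspace E of ℝⁿ and a discrete additive subgroup D of ℝⁿ such that the topological closure of H equals the set E + D = {e + d : e ∈ E, d ∈ D}, the intersection of E with the ℝ-linear span of D is {0}, and E + span_ℝ(D) = span_ℝ(H). -/

import Mathlib

open Pointwise

section Aux

variable {n : ℕ}

/-- The maximal linear subspace contained in a closed additive subgroup. -/
def maxSub (G : AddSubgroup (Fin n → ℝ)) : Submodule ℝ (Fin n → ℝ) where
  carrier := {x | ∀ t : ℝ, t • x ∈ G}
  add_mem' := fun hx hy t => by simpa [smul_add] using G.add_mem (hx t) (hy t)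
  zero_mem' := fun t => by simpa using G.zero_mem
  smul_mem' := fun c x hx t => by simpa [smul_smul] using hx (t * c)

lemma discrete_key (G : AddSubgroup (Fin n → ℝ)) (hG : IsClosed (G : Set (Fin n → ℝ)))
    (F : Submodule ℝ (Fin n → ℝ)) (hEF : ∀ x ∈ F, (∀ t : ℝ, t • x ∈ G) → x = 0) :
    ∃ ε > (0:ℝ), ∀ x ∈ G, x ∈ F → ‖x‖ < ε → x = 0 := by
  by_contra hc
  push_neg at hc
  have hseq : ∀ k : ℕ, ∃ x : Fin n → ℝ, x ∈ G ∧ x ∈ F ∧ ‖x‖ < 1 / (k + 1) ∧ x ≠ 0 := by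
    intro k
    obtain ⟨x, hxG, hxF, hxn, hx0⟩ := hc (1 / (k + 1)) (by positivity)
    exact ⟨x, hxG, hxF, hxn, hx0⟩
  choose d hdG hdF hdn hd0 using hseq
  have hdpos : ∀ k, (0:ℝ) < ‖d k‖ := fun k => norm_pos_iff.mpr (hd0 k)
  set u : ℕ → Fin n → ℝ := fun k => ‖d k‖⁻¹ • d k with hu
  have hus : ∀ k, u k ∈ Metric.sphere (0 : Fin n → ℝ) 1 := by
    intro k
    simp [hu, norm_smul, abs_of_pos (hdpos k), inv_mul_cancel₀ (hdpos k).ne']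
  obtain ⟨v, hv, φ, hφ, hconv⟩ :=
    (isCompact_sphere (0 : Fin n → ℝ) 1).tendsto_subseq hus
  -- the norms tend to 0
  have hd0lim : Filter.Tendsto (fun k => ‖d (φ k)‖) Filter.atTop (nhds 0) := by
    have h1 : Filter.Tendsto (fun k : ℕ => 1 / ((k:ℝ) + 1)) Filter.atTop (nhds 0) :=
      tendsto_one_div_add_atTop_nhds_zero_nat
    refine squeeze_zero (fun k => (hdpos (φ k)).le) (fun k => ?_) h1
    refine le_trans (hdn (φ k)).le ?_
    have hk : (k:ℝ) + 1 ≤ (φ k : ℝ) + 1 := by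
      exact_mod_cast Nat.succ_le_succ (hφ.id_le k)
    gcongr
  have hvF : v ∈ F := by
    have hF : IsClosed (F : Set (Fin n → ℝ)) := F.closed_of_finiteDimensional
    exact hF.mem_of_tendsto hconv (Filter.Eventually.of_forall fun k =>
      F.smul_mem _ (hdF (φ k)))
  have hvG : ∀ t : ℝ, t • v ∈ G := by
    intro t
    -- c k = ⌊t / ‖d (φ k)‖⌋
    set c : ℕ → ℤ := fun k => ⌊t / ‖d (φ k)‖⌋ with hcdef
    have hmem : ∀ k, (c k • d (φ k) : Fin n → ℝ) ∈ G := fun k => zsmul_mem (hdG (φ k)) _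
    have heq : ∀ k, (c k • d (φ k) : Fin n → ℝ) = ((c k : ℝ) * ‖d (φ k)‖) • u (φ k) := by
      intro k
      rw [hu]
      rw [smul_smul, mul_assoc, mul_inv_cancel₀ (hdpos (φ k)).ne', mul_one, ← Int.cast_smul_eq_zsmul ℝ]
    have hscal : Filter.Tendsto (fun k => (c k : ℝ) * ‖d (φ k)‖) Filter.atTop (nhds t) := by
      have hbound : ∀ k, |(c k : ℝ) * ‖d (φ k)‖ - t| ≤ ‖d (φ k)‖ := by
        intro k
        have ha := hdpos (φ k)
        have h2 : (c k : ℝ) ≤ t / ‖d (φ k)‖ := Int.floor_le _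
        have h1 : t / ‖d (φ k)‖ - 1 < (c k : ℝ) := Int.sub_one_lt_floor _
        have ht : t / ‖d (φ k)‖ * ‖d (φ k)‖ = t := div_mul_cancel₀ t ha.ne'
        rw [abs_le]
        constructor <;>
          nlinarith [mul_le_mul_of_nonneg_right h2 ha.le,
            mul_le_mul_of_nonneg_right h1.le ha.le]
      rw [tendsto_iff_norm_sub_tendsto_zero]
      simp only [Real.norm_eq_abs]
      exact squeeze_zero (fun k => abs_nonneg _) hbound hd0lim
    have : Filter.Tendsto (fun k => (c k • d (φ k) : Fin n → ℝ)) Filter.atTop (nhds (t • v)) := by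
      simp_rw [heq]
      exact hscal.smul hconv
    exact hG.mem_of_tendsto this (Filter.Eventually.of_forall hmem)
  have := hEF v hvF hvG
  rw [this] at hv
  simp at hv

end Aux

/-- Waldschmidt's structure theorem applied to the closure of an additive
subgroup `H` of `ℝⁿ`: the closure of `H` is `E + D` with `E` a linear subspace,
`D` a discrete additive subgroup, `E ∩ span ℝ D = {0}` and
`E + span ℝ D = span ℝ H`. -/
theorem closure_eq_subspace_add_discrete (n : ℕ) (H : AddSubgroup (Fin n → ℝ)) :
    ∃ (E : Submodule ℝ (Fin n → ℝ)) (D : AddSubgroup (Fin n → ℝ)),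
      DiscreteTopology D ∧
      closure (H : Set (Fin n → ℝ)) = (E : Set (Fin n → ℝ)) + (D : Set (Fin n → ℝ)) ∧
      E ⊓ Submodule.span ℝ (D : Set (Fin n → ℝ)) = ⊥ ∧
      E ⊔ Submodule.span ℝ (D : Set (Fin n → ℝ)) = Submodule.span ℝ (H : Set (Fin n → ℝ)) := by
  set G : AddSubgroup (Fin n → ℝ) := H.topologicalClosure with hGdef
  have hGset : (G : Set (Fin n → ℝ)) = closure (H : Set (Fin n → ℝ)) := rfl
  have hGclosed : IsClosed (G : Set (Fin n → ℝ)) := by rw [hGset]; exact isClosed_closure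
  set E := maxSub G with hEdef
  have hEG : ∀ x ∈ E, x ∈ G := fun x hx => by simpa using hx 1
  obtain ⟨F, hF⟩ := Submodule.exists_isCompl E
  set D : AddSubgroup (Fin n → ℝ) := G ⊓ F.toAddSubgroup with hDdef
  have hDG : ∀ x ∈ D, x ∈ G := fun x hx => hx.1
  have hDF : ∀ x ∈ D, x ∈ F := fun x hx => hx.2
  have hEF : ∀ x ∈ F, (∀ t : ℝ, t • x ∈ G) → x = 0 := by
    intro x hxF hxE
    have : x ∈ E ⊓ F := ⟨hxE, hxF⟩
    rwa [hF.inf_eq_bot, Submodule.mem_bot] at this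
  obtain ⟨ε, hε, hεd⟩ := discrete_key G hGclosed F hEF
  refine ⟨E, D, ?_, ?_, ?_, ?_⟩
  · refine discreteTopology_iff_isOpen_singleton_zero.mpr ⟨Metric.ball 0 ε, Metric.isOpen_ball, ?_⟩
    ext ⟨x, hx⟩
    simp only [Set.mem_preimage, Metric.mem_ball, dist_zero_right, Set.mem_singleton_iff]
    constructor
    · intro hxε
      exact Subtype.ext (hεd x (hDG x hx) (hDF x hx) hxε)
    · intro h
      have hx0 : x = 0 := by simpa using congrArg Subtype.val h
      simpa [hx0] using hε
  · rw [← hGset]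
    ext x
    constructor
    · intro hx
      obtain ⟨e, f, he, hf, hef⟩ := Submodule.codisjoint_iff_exists_add_eq.mp hF.codisjoint x
      refine ⟨e, he, f, ⟨?_, hf⟩, hef⟩
      have : f = x - e := by rw [← hef]; ring_nf
      rw [this]
      exact G.sub_mem hx (hEG e he)
    · rintro ⟨e, he, d, hd, rfl⟩
      exact G.add_mem (hEG e he) (hDG d hd)
  · have hspan : Submodule.span ℝ (D : Set (Fin n → ℝ)) ≤ F :=
      Submodule.span_le.mpr fun x hx => hDF x hx
    exact eq_bot_iff.mpr (le_trans (inf_le_inf_left E hspan) hF.inf_eq_bot.le)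
  · have hGspan : Submodule.span ℝ (G : Set (Fin n → ℝ)) =
        Submodule.span ℝ (H : Set (Fin n → ℝ)) := by
      apply le_antisymm
      · rw [Submodule.span_le]
        intro x hx
        have hcl : IsClosed ((Submodule.span ℝ (H : Set (Fin n → ℝ))) : Set (Fin n → ℝ)) :=
          Submodule.closed_of_finiteDimensional _
        have : (G : Set (Fin n → ℝ)) ⊆ (Submodule.span ℝ (H : Set (Fin n → ℝ)) : Set _) := by
          rw [hGset]
          exact closure_minimal (fun y hy => Submodule.subset_span hy) hcl
        exact this hx
      · exact Submodule.span_mono (fun y hy => H.le_topologicalClosure hy)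
    rw [← hGspan]
    apply le_antisymm
    · refine sup_le ?_ ?_
      · intro x hx
        exact Submodule.subset_span (hEG x hx)
      · exact Submodule.span_mono (fun y hy => hDG y hy)
    · rw [Submodule.span_le]
      intro x hx
      obtain ⟨e, f, he, hf, hef⟩ := Submodule.codisjoint_iff_exists_add_eq.mp hF.codisjoint x
      have hfD : f ∈ D := by
        have : f = x - e := by rw [← hef]; ring_nf
        exact ⟨this ▸ G.sub_mem hx (hEG e he), hf⟩
      rw [← hef]
      exact Submodule.add_mem _ (Submodule.mem_sup_left he)
        (Submodule.mem_sup_right (Submodule.subset_span hfD))
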